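/- Under the Algorithm 1 setup with the F-local attack model and 𝓑 ≠ ∅: if G is ((d+1)F+1)-robust, then all benign agents achieve consensus exponentially, regardless of the values sent by the misbehaving agents; that is, there exist x̄ ∈ ℝ^d, C ≥ 0, and γ ∈ [0, 1) such that ‖x^i(k) − x̄‖ ≤ C·γ^k for every i ∈ 𝓑 and every k ≥ 0. -/

import Mathlib

/-- `Psi x n` is the intersection, over all subsets `S` of the (finite) index set
with `|S| = m - n` (where `m` is the cardinality of the index set), of the convex
hull of the points indexed by `S`. -/
def Psi {d : ℕ} {ι : Type*} [Fintype ι] (x : ι → (Fin d → ℝ)) (n : ℕ) :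
    Set (Fin d → ℝ) :=
  ⋂ S ∈ {S : Finset ι | S.card = Fintype.card ι - n},
    convexHull ℝ (x '' (S : Set ι))

/-- The setup of Algorithm 1: `G` is the (undirected) communication graph on the
finite vertex set `V` in which every vertex has at least `(d+1)F + 1` neighbors,
`Fset` is the set of misbehaving agents, `x k i` is the state of agent `i` at time
`k`, and `msg k j i` is the value agent `j` sends to agent `i` at time `k` (equal
to `x k j` whenever `j` is benign).  Every benign agent `i` updates at time `k` by
sorting on coordinate `p = (k % d) + 1` (0-indexed: `k % d`): it chooses sets
`Y`, `Z` of `(d+1)F + 1` neighbors whose received values are smallest (resp.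
largest) in that coordinate, picks middle points `y ∈ Ψ(Y-values, F)` and
`z ∈ Ψ(Z-values, F)`, and sets `x (k+1) i = (x k i + y + z) / 3`. -/
structure Algo1 {V : Type*} [Fintype V] [DecidableEq V]
    (d F : ℕ) (hd : 0 < d) (G : SimpleGraph V) [DecidableRel G.Adj]
    (Fset : Finset V) (x : ℕ → V → (Fin d → ℝ))
    (msg : ℕ → V → V → (Fin d → ℝ)) : Prop where
  degree : ∀ i : V, (d + 1) * F + 1 ≤ (G.neighborFinset i).card
  benign_msg : ∀ (k : ℕ) (j i : V), j ∉ Fset → msg k j i = x k j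
  update : ∀ (k : ℕ) (i : V), i ∉ Fset →
    ∃ (Y Z : Finset V) (yv zv : Fin d → ℝ),
      Y ⊆ G.neighborFinset i ∧ Z ⊆ G.neighborFinset i ∧
      Y.card = (d + 1) * F + 1 ∧ Z.card = (d + 1) * F + 1 ∧
      (∀ a ∈ Y, ∀ b ∈ G.neighborFinset i, b ∉ Y →
        msg k a i ⟨k % d, Nat.mod_lt k hd⟩ ≤ msg k b i ⟨k % d, Nat.mod_lt k hd⟩) ∧
      (∀ a ∈ Z, ∀ b ∈ G.neighborFinset i, b ∉ Z →
        msg k b i ⟨k % d, Nat.mod_lt k hd⟩ ≤ msg k a i ⟨k % d, Nat.mod_lt k hd⟩) ∧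
      yv ∈ Psi (fun j : Y => msg k j i) F ∧
      zv ∈ Psi (fun j : Z => msg k j i) F ∧
      x (k + 1) i = ((1 : ℝ) / 3) • (x k i + yv + zv)

/-- A graph is `r`-robust if for every pair of disjoint nonempty proper subsets
`V₁, V₂` of the vertex set, some agent in `V₁` has at least `r` neighbors outside
`V₁`, or some agent in `V₂` has at least `r` neighbors outside `V₂`. -/
def RRobust {V : Type*} [Fintype V] [DecidableEq V]
    (G : SimpleGraph V) [DecidableRel G.Adj] (r : ℕ) : Prop :=
  ∀ V₁ V₂ : Finset V, V₁.Nonempty → V₂.Nonempty → Disjoint V₁ V₂ →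
    V₁ ≠ Finset.univ → V₂ ≠ Finset.univ →
    (∃ i ∈ V₁, r ≤ (G.neighborFinset i \ V₁).card) ∨
    (∃ i ∈ V₂, r ≤ (G.neighborFinset i \ V₂).card)

/-- A graph is `(r, s)`-robust if for every pair of disjoint nonempty proper
subsets `V₁, V₂` of the vertex set, either every agent in `V₁` has at least `r`
neighbors outside `V₁`, or every agent in `V₂` has at least `r` neighbors outside
`V₂`, or at least `s` agents in `V₁ ∪ V₂` have at least `r` neighbors outside the
set among `V₁`, `V₂` containing them. -/
def RSRobust {V : Type*} [Fintype V] [DecidableEq V]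
    (G : SimpleGraph V) [DecidableRel G.Adj] (r s : ℕ) : Prop :=
  ∀ V₁ V₂ : Finset V, V₁.Nonempty → V₂.Nonempty → Disjoint V₁ V₂ →
    V₁ ≠ Finset.univ → V₂ ≠ Finset.univ →
    (∀ i ∈ V₁, r ≤ (G.neighborFinset i \ V₁).card) ∨
    (∀ i ∈ V₂, r ≤ (G.neighborFinset i \ V₂).card) ∨
    s ≤ ((V₁.filter (fun i => r ≤ (G.neighborFinset i \ V₁).card)) ∪
         (V₂.filter (fun i => r ≤ (G.neighborFinset i \ V₂).card))).card


lemma psi_mem_hull {d : ℕ} {ι : Type*} [Fintype ι] {f : ι → Fin d → ℝ} {n : ℕ}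
    {v : Fin d → ℝ} (hv : v ∈ Psi f n) {S : Finset ι}
    (hcard : S.card = Fintype.card ι - n) :
    v ∈ convexHull ℝ (f '' (S : Set ι)) :=
  Set.mem_iInter₂.1 hv S hcard

lemma hull_coord_le {d : ℕ} {s : Set (Fin d → ℝ)} {q : Fin d} {c : ℝ}
    (h : ∀ v ∈ s, v q ≤ c) {w : Fin d → ℝ} (hw : w ∈ convexHull ℝ s) : w q ≤ c :=
  convexHull_min h (convex_halfSpace_le ⟨fun a b => rfl, fun r a => rfl⟩ c) hw

lemma hull_coord_ge {d : ℕ} {s : Set (Fin d → ℝ)} {q : Fin d} {c : ℝ}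
    (h : ∀ v ∈ s, c ≤ v q) {w : Fin d → ℝ} (hw : w ∈ convexHull ℝ s) : c ≤ w q :=
  convexHull_min h (convex_halfSpace_ge ⟨fun a b => rfl, fun r a => rfl⟩ c) hw

lemma psi_subset_hull {d : ℕ} {V : Type*} [DecidableEq V] {Y : Finset V}
    {g : V → Fin d → ℝ} {n : ℕ} {v : Fin d → ℝ}
    (hv : v ∈ Psi (fun j : Y => g j) n) {S : Finset V} (hS : S ⊆ Y)
    (hcard : S.card = Y.card - n) :
    v ∈ convexHull ℝ (g '' (S : Set V)) := by
  classical
  set S' : Finset {j // j ∈ Y} := S.subtype (· ∈ Y) with hS'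
  have hcard' : S'.card = Fintype.card {j // j ∈ Y} - n := by
    rw [Fintype.card_coe, hS', Finset.card_subtype,
      Finset.filter_true_of_mem (fun a ha => hS ha)]
    exact hcard
  have h1 := psi_mem_hull hv hcard'
  have himg : ((fun j : Y => g j) '' (S' : Set {j // j ∈ Y})) = g '' (S : Set V) := by
    ext w
    constructor
    · rintro ⟨a, ha, rfl⟩
      exact ⟨a, by simpa [hS'] using ha, rfl⟩
    · rintro ⟨a, ha, rfl⟩
      refine ⟨⟨a, hS ha⟩, by simpa [hS'] using ha, rfl⟩
  rwa [himg] at h1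

section Core

variable {V : Type*} [Fintype V] [DecidableEq V] {d F : ℕ}
  {G : SimpleGraph V} [DecidableRel G.Adj] {Fset : Finset V}
  {msg : ℕ → V → V → (Fin d → ℝ)}

/-- If all benign values indexed by `Y` are `≤ c` in coordinate `p`, so is `yv`. -/
lemma yv_le_of_benign_le {i : V} {k : ℕ} {Y : Finset V} {yv : Fin d → ℝ}
    (hlocal : (Fset ∩ G.neighborFinset i).card ≤ F)
    (hY : Y ⊆ G.neighborFinset i) (hYcard : Y.card = (d + 1) * F + 1)
    (hyv : yv ∈ Psi (fun j : Y => msg k j i) F)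
    {p : Fin d} {c : ℝ} (hc : ∀ j ∈ Y, j ∉ Fset → msg k j i p ≤ c) :
    yv p ≤ c := by
  classical
  have hint : (Y ∩ Fset).card ≤ F := by
    refine le_trans (Finset.card_le_card ?_) hlocal
    intro a ha
    rw [Finset.mem_inter] at ha ⊢
    exact ⟨ha.2, hY ha.1⟩
  have hm : (d + 1) * F = d * F + F := by ring
  have hYb : d * F + 1 ≤ (Y \ Fset).card := by
    have := Finset.card_sdiff_add_card_inter Y Fset
    omega
  obtain ⟨S, hS1, hS2⟩ := Finset.exists_subset_card_eq hYb
  have hSY : S ⊆ Y := hS1.trans Finset.sdiff_subset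
  have hmem := psi_subset_hull (g := fun j => msg k j i) hyv hSY (by omega)
  refine hull_coord_le ?_ hmem
  rintro w ⟨a, ha, rfl⟩
  have haS : a ∈ S := ha
  have h2 := hS1 haS
  rw [Finset.mem_sdiff] at h2
  exact hc a h2.1 h2.2

lemma zv_ge_of_benign_ge {i : V} {k : ℕ} {Z : Finset V} {zv : Fin d → ℝ}
    (hlocal : (Fset ∩ G.neighborFinset i).card ≤ F)
    (hZ : Z ⊆ G.neighborFinset i) (hZcard : Z.card = (d + 1) * F + 1)
    (hzv : zv ∈ Psi (fun j : Z => msg k j i) F)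
    {p : Fin d} {c : ℝ} (hc : ∀ j ∈ Z, j ∉ Fset → c ≤ msg k j i p) :
    c ≤ zv p := by
  classical
  have hint : (Z ∩ Fset).card ≤ F := by
    refine le_trans (Finset.card_le_card ?_) hlocal
    intro a ha
    rw [Finset.mem_inter] at ha ⊢
    exact ⟨ha.2, hZ ha.1⟩
  have hm : (d + 1) * F = d * F + F := by ring
  have hZb : d * F + 1 ≤ (Z \ Fset).card := by
    have := Finset.card_sdiff_add_card_inter Z Fset
    omega
  obtain ⟨S, hS1, hS2⟩ := Finset.exists_subset_card_eq hZb
  have hSZ : S ⊆ Z := hS1.trans Finset.sdiff_subset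
  have hmem := psi_subset_hull (g := fun j => msg k j i) hzv hSZ (by omega)
  refine hull_coord_ge ?_ hmem
  rintro w ⟨a, ha, rfl⟩
  have h2 := hS1 ha
  rw [Finset.mem_sdiff] at h2
  exact hc a h2.1 h2.2

/-- If there are `dF+1` neighbors with value `≤ c` in the sorted coordinate,
then `yv` is `≤ c` in that coordinate. -/
lemma yv_le_of_low_nbrs {i : V} {k : ℕ} {Y : Finset V} {yv : Fin d → ℝ} {p : Fin d}
    (hY : Y ⊆ G.neighborFinset i) (hYcard : Y.card = (d + 1) * F + 1)
    (hsort : ∀ a ∈ Y, ∀ b ∈ G.neighborFinset i, b ∉ Y → msg k a i p ≤ msg k b i p)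
    (hyv : yv ∈ Psi (fun j : Y => msg k j i) F)
    {c : ℝ} {W : Finset V} (hW1 : W ⊆ G.neighborFinset i)
    (hW2 : d * F + 1 ≤ W.card) (hW3 : ∀ j ∈ W, msg k j i p ≤ c) :
    yv p ≤ c := by
  classical
  have hm : (d + 1) * F = d * F + F := by ring
  set S₀ : Finset V := Y.filter (fun a => msg k a i p ≤ c) with hS₀
  have hcard0 : d * F + 1 ≤ S₀.card := by
    by_cases hsub : W ⊆ Y
    · refine le_trans hW2 (Finset.card_le_card ?_)
      intro a ha
      rw [hS₀, Finset.mem_filter]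
      exact ⟨hsub ha, hW3 a ha⟩
    · obtain ⟨j, hjW, hjY⟩ := Finset.not_subset.1 hsub
      have hall : S₀ = Y := by
        rw [hS₀]
        refine Finset.filter_true_of_mem ?_
        intro a ha
        exact le_trans (hsort a ha j (hW1 hjW) hjY) (hW3 j hjW)
      rw [hall, hYcard]; omega
  obtain ⟨S, hS1, hS2⟩ := Finset.exists_subset_card_eq hcard0
  have hSY : S ⊆ Y := hS1.trans (Finset.filter_subset _ _)
  have hmem := psi_subset_hull (g := fun j => msg k j i) hyv hSY (by omega)
  refine hull_coord_le ?_ hmem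
  rintro w ⟨a, ha, rfl⟩
  have h2 := hS1 ha
  rw [hS₀, Finset.mem_filter] at h2
  exact h2.2

lemma zv_ge_of_high_nbrs {i : V} {k : ℕ} {Z : Finset V} {zv : Fin d → ℝ} {p : Fin d}
    (hZ : Z ⊆ G.neighborFinset i) (hZcard : Z.card = (d + 1) * F + 1)
    (hsort : ∀ a ∈ Z, ∀ b ∈ G.neighborFinset i, b ∉ Z → msg k b i p ≤ msg k a i p)
    (hzv : zv ∈ Psi (fun j : Z => msg k j i) F)
    {c : ℝ} {W : Finset V} (hW1 : W ⊆ G.neighborFinset i)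
    (hW2 : d * F + 1 ≤ W.card) (hW3 : ∀ j ∈ W, c ≤ msg k j i p) :
    c ≤ zv p := by
  classical
  have hm : (d + 1) * F = d * F + F := by ring
  set S₀ : Finset V := Z.filter (fun a => c ≤ msg k a i p) with hS₀
  have hcard0 : d * F + 1 ≤ S₀.card := by
    by_cases hsub : W ⊆ Z
    · refine le_trans hW2 (Finset.card_le_card ?_)
      intro a ha
      rw [hS₀, Finset.mem_filter]
      exact ⟨hsub ha, hW3 a ha⟩
    · obtain ⟨j, hjW, hjZ⟩ := Finset.not_subset.1 hsub
      have hall : S₀ = Z := by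
        rw [hS₀]
        refine Finset.filter_true_of_mem ?_
        intro a ha
        exact le_trans (hW3 j hjW) (hsort a ha j (hW1 hjW) hjZ)
      rw [hall, hZcard]; omega
  obtain ⟨S, hS1, hS2⟩ := Finset.exists_subset_card_eq hcard0
  have hSZ : S ⊆ Z := hS1.trans (Finset.filter_subset _ _)
  have hmem := psi_subset_hull (g := fun j => msg k j i) hzv hSZ (by omega)
  refine hull_coord_ge ?_ hmem
  rintro w ⟨a, ha, rfl⟩
  have h2 := hS1 ha
  rw [hS₀, Finset.mem_filter] at h2
  exact h2.2

end Core

section Step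

variable {V : Type*} [Fintype V] [DecidableEq V] {d F : ℕ}
  {G : SimpleGraph V} [DecidableRel G.Adj] {Fset : Finset V}
  {x : ℕ → V → (Fin d → ℝ)} {msg : ℕ → V → V → (Fin d → ℝ)}

/-- max over benign agents of coordinate `p` at time `k`. -/
noncomputable def Mx (Fset : Finset V) (hB : (Fsetᶜ : Finset V).Nonempty)
    (x : ℕ → V → (Fin d → ℝ)) (k : ℕ) (p : Fin d) : ℝ :=
  (Fsetᶜ).sup' hB fun i => x k i p

noncomputable def mx (Fset : Finset V) (hB : (Fsetᶜ : Finset V).Nonempty)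
    (x : ℕ → V → (Fin d → ℝ)) (k : ℕ) (p : Fin d) : ℝ :=
  (Fsetᶜ).inf' hB fun i => x k i p

lemma le_Mx (hB : (Fsetᶜ : Finset V).Nonempty) {i : V} (hi : i ∉ Fset)
    (k : ℕ) (p : Fin d) : x k i p ≤ Mx Fset hB x k p := by
  unfold Mx; exact Finset.le_sup' (fun i => x k i p) (Finset.mem_compl.2 hi)

lemma mx_le (hB : (Fsetᶜ : Finset V).Nonempty) {i : V} (hi : i ∉ Fset)
    (k : ℕ) (p : Fin d) : mx Fset hB x k p ≤ x k i p := by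
  unfold mx; exact Finset.inf'_le (fun i => x k i p) (Finset.mem_compl.2 hi)

lemma mx_le_Mx (hB : (Fsetᶜ : Finset V).Nonempty) (k : ℕ) (p : Fin d) :
    mx Fset hB x k p ≤ Mx Fset hB x k p := by
  have h2 := hB
  obtain ⟨i, hi⟩ := h2
  calc mx Fset hB x k p ≤ x k i p := mx_le hB (Finset.mem_compl.1 hi) k p
    _ ≤ Mx Fset hB x k p := le_Mx hB (Finset.mem_compl.1 hi) k p

def pc {d : ℕ} (hd : 0 < d) (k : ℕ) : Fin d := ⟨k % d, Nat.mod_lt k hd⟩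

/-- The master step lemma: extraction of the update with all needed bounds. -/
lemma step_master {hd : 0 < d} (halg : Algo1 d F hd G Fset x msg)
    (hB : (Fsetᶜ : Finset V).Nonempty)
    (hlocal : ∀ i : V, (Fset ∩ G.neighborFinset i).card ≤ F)
    (k : ℕ) {i : V} (hi : i ∉ Fset) :
    ∃ yv zv : Fin d → ℝ,
      (∀ p, mx Fset hB x k p ≤ yv p ∧ yv p ≤ Mx Fset hB x k p) ∧
      (∀ p, mx Fset hB x k p ≤ zv p ∧ zv p ≤ Mx Fset hB x k p) ∧
      (∀ (c : ℝ) (W : Finset V), W ⊆ G.neighborFinset i → d * F + 1 ≤ W.card →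
        (∀ j ∈ W, msg k j i (pc hd k) ≤ c) → yv (pc hd k) ≤ c) ∧
      (∀ (c : ℝ) (W : Finset V), W ⊆ G.neighborFinset i → d * F + 1 ≤ W.card →
        (∀ j ∈ W, c ≤ msg k j i (pc hd k)) → c ≤ zv (pc hd k)) ∧
      ∀ p, x (k + 1) i p = (x k i p + yv p + zv p) / 3 := by
  obtain ⟨Y, Z, yv, zv, hYn, hZn, hYc, hZc, hYs, hZs, hyv, hzv, hupd⟩ :=
    halg.update k i hi
  have hbm : ∀ (j : V), j ∉ Fset → ∀ p, mx Fset hB x k p ≤ msg k j i p ∧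
      msg k j i p ≤ Mx Fset hB x k p := by
    intro j hj p
    rw [halg.benign_msg k j i hj]
    exact ⟨mx_le hB hj k p, le_Mx hB hj k p⟩
  refine ⟨yv, zv, ?_, ?_, ?_, ?_, ?_⟩
  · intro p
    exact ⟨zv_ge_of_benign_ge (hlocal i) hYn hYc hyv
        (fun j hj hjb => (hbm j hjb p).1),
      yv_le_of_benign_le (hlocal i) hYn hYc hyv
        (fun j hj hjb => (hbm j hjb p).2)⟩
  · intro p
    exact ⟨zv_ge_of_benign_ge (hlocal i) hZn hZc hzv
        (fun j hj hjb => (hbm j hjb p).1),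
      yv_le_of_benign_le (hlocal i) hZn hZc hzv
        (fun j hj hjb => (hbm j hjb p).2)⟩
  · intro c W hW1 hW2 hW3
    exact yv_le_of_low_nbrs hYn hYc hYs hyv hW1 hW2 hW3
  · intro c W hW1 hW2 hW3
    exact zv_ge_of_high_nbrs hZn hZc hZs hzv hW1 hW2 hW3
  · intro p
    rw [hupd]
    simp only [Pi.smul_apply, Pi.add_apply, smul_eq_mul]
    ring

end Step

section Safety

variable {V : Type*} [Fintype V] [DecidableEq V] {d F : ℕ}
  {G : SimpleGraph V} [DecidableRel G.Adj] {Fset : Finset V}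
  {x : ℕ → V → (Fin d → ℝ)} {msg : ℕ → V → V → (Fin d → ℝ)}
  {hd : 0 < d}

lemma step_le (halg : Algo1 d F hd G Fset x msg) (hB : (Fsetᶜ : Finset V).Nonempty)
    (hlocal : ∀ i : V, (Fset ∩ G.neighborFinset i).card ≤ F)
    (k : ℕ) {i : V} (hi : i ∉ Fset) (p : Fin d) :
    x (k + 1) i p ≤ (x k i p + 2 * Mx Fset hB x k p) / 3 := by
  obtain ⟨yv, zv, hy, hz, _, _, heq⟩ := step_master halg hB hlocal k hi
  rw [heq p]
  have h1 := (hy p).2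
  have h2 := (hz p).2
  linarith

lemma step_ge (halg : Algo1 d F hd G Fset x msg) (hB : (Fsetᶜ : Finset V).Nonempty)
    (hlocal : ∀ i : V, (Fset ∩ G.neighborFinset i).card ≤ F)
    (k : ℕ) {i : V} (hi : i ∉ Fset) (p : Fin d) :
    (x k i p + 2 * mx Fset hB x k p) / 3 ≤ x (k + 1) i p := by
  obtain ⟨yv, zv, hy, hz, _, _, heq⟩ := step_master halg hB hlocal k hi
  rw [heq p]
  have h1 := (hy p).1
  have h2 := (hz p).1
  linarith

lemma Mx_succ_le (halg : Algo1 d F hd G Fset x msg) (hB : (Fsetᶜ : Finset V).Nonempty)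
    (hlocal : ∀ i : V, (Fset ∩ G.neighborFinset i).card ≤ F)
    (k : ℕ) (p : Fin d) :
    Mx Fset hB x (k + 1) p ≤ Mx Fset hB x k p := by
  have : ∀ i ∈ Fsetᶜ, x (k + 1) i p ≤ Mx Fset hB x k p := by
    intro i hi
    have hi' : i ∉ Fset := Finset.mem_compl.1 hi
    have h1 := step_le halg hB hlocal k hi' p
    have h2 := le_Mx (x := x) hB hi' k p
    linarith
  exact Finset.sup'_le hB _ this

lemma mx_le_succ (halg : Algo1 d F hd G Fset x msg) (hB : (Fsetᶜ : Finset V).Nonempty)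
    (hlocal : ∀ i : V, (Fset ∩ G.neighborFinset i).card ≤ F)
    (k : ℕ) (p : Fin d) :
    mx Fset hB x k p ≤ mx Fset hB x (k + 1) p := by
  have : ∀ i ∈ Fsetᶜ, mx Fset hB x k p ≤ x (k + 1) i p := by
    intro i hi
    have hi' : i ∉ Fset := Finset.mem_compl.1 hi
    have h1 := step_ge halg hB hlocal k hi' p
    have h2 := mx_le (x := x) hB hi' k p
    linarith
  exact Finset.le_inf' hB _ this

lemma Mx_mono (halg : Algo1 d F hd G Fset x msg) (hB : (Fsetᶜ : Finset V).Nonempty)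
    (hlocal : ∀ i : V, (Fset ∩ G.neighborFinset i).card ≤ F)
    {k k' : ℕ} (hk : k ≤ k') (p : Fin d) :
    Mx Fset hB x k' p ≤ Mx Fset hB x k p := by
  induction k', hk using Nat.le_induction with
  | base => exact le_refl _
  | succ m hm ih => exact le_trans (Mx_succ_le halg hB hlocal m p) ih

lemma mx_mono (halg : Algo1 d F hd G Fset x msg) (hB : (Fsetᶜ : Finset V).Nonempty)
    (hlocal : ∀ i : V, (Fset ∩ G.neighborFinset i).card ≤ F)
    {k k' : ℕ} (hk : k ≤ k') (p : Fin d) :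
    mx Fset hB x k p ≤ mx Fset hB x k' p := by
  induction k', hk using Nat.le_induction with
  | base => exact le_refl _
  | succ m hm ih => exact le_trans ih (mx_le_succ halg hB hlocal m p)

lemma step_active_high (halg : Algo1 d F hd G Fset x msg)
    (hB : (Fsetᶜ : Finset V).Nonempty)
    (hlocal : ∀ i : V, (Fset ∩ G.neighborFinset i).card ≤ F)
    (k : ℕ) {i : V} (hi : i ∉ Fset) {c : ℝ} {W : Finset V}
    (hW1 : W ⊆ G.neighborFinset i) (hW2 : d * F + 1 ≤ W.card)
    (hW3 : ∀ j ∈ W, j ∉ Fset ∧ x k j (pc hd k) ≤ c) :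
    x (k + 1) i (pc hd k) ≤ (x k i (pc hd k) + c + Mx Fset hB x k (pc hd k)) / 3 := by
  obtain ⟨yv, zv, hy, hz, hylow, _, heq⟩ := step_master halg hB hlocal k hi
  rw [heq (pc hd k)]
  have hyc : yv (pc hd k) ≤ c := by
    refine hylow c W hW1 hW2 ?_
    intro j hj
    rw [halg.benign_msg k j i (hW3 j hj).1]
    exact (hW3 j hj).2
  have h2 := (hz (pc hd k)).2
  linarith

lemma step_active_low (halg : Algo1 d F hd G Fset x msg)
    (hB : (Fsetᶜ : Finset V).Nonempty)
    (hlocal : ∀ i : V, (Fset ∩ G.neighborFinset i).card ≤ F)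
    (k : ℕ) {i : V} (hi : i ∉ Fset) {c : ℝ} {W : Finset V}
    (hW1 : W ⊆ G.neighborFinset i) (hW2 : d * F + 1 ≤ W.card)
    (hW3 : ∀ j ∈ W, j ∉ Fset ∧ c ≤ x k j (pc hd k)) :
    (x k i (pc hd k) + c + mx Fset hB x k (pc hd k)) / 3 ≤ x (k + 1) i (pc hd k) := by
  obtain ⟨yv, zv, hy, hz, _, hzhigh, heq⟩ := step_master halg hB hlocal k hi
  rw [heq (pc hd k)]
  have hzc : c ≤ zv (pc hd k) := by
    refine hzhigh c W hW1 hW2 ?_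
    intro j hj
    rw [halg.benign_msg k j i (hW3 j hj).1]
    exact (hW3 j hj).2
  have h2 := (hy (pc hd k)).1
  linarith

end Safety

section Contract

variable {V : Type*} [Fintype V] [DecidableEq V] {d F : ℕ}
  {G : SimpleGraph V} [DecidableRel G.Adj] {Fset : Finset V}
  {x : ℕ → V → (Fin d → ℝ)} {msg : ℕ → V → V → (Fin d → ℝ)}
  {hd : 0 < d}

lemma mod_helper (d k0 j p : ℕ) (hd : 0 < d) (hp : p < d) :
    (k0 + (j * d + (p + d - k0 % d) % d)) % d = p := by
  have h1 : k0 + (j * d + (p + d - k0 % d) % d)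
      = (k0 + (p + d - k0 % d) % d) + j * d := by ring
  rw [h1, Nat.add_mul_mod_self_right, Nat.add_mod_mod]
  have ha : k0 % d < d := Nat.mod_lt _ hd
  have h2 := Nat.div_add_mod k0 d
  have h3 : k0 + (p + d - k0 % d) = (p + d) + d * (k0 / d) := by omega
  rw [h3, Nat.add_mul_mod_self_left, Nat.add_mod_right]
  exact Nat.mod_eq_of_lt hp

lemma window_contraction (halg : Algo1 d F hd G Fset x msg)
    (hB : (Fsetᶜ : Finset V).Nonempty)
    (hlocal : ∀ i : V, (Fset ∩ G.neighborFinset i).card ≤ F)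
    (hrobust : RRobust G ((d + 1) * F + 1)) (p : Fin d) (k0 : ℕ) :
    Mx Fset hB x (k0 + (2 * (Fsetᶜ : Finset V).card + 1) * d) p -
      mx Fset hB x (k0 + (2 * (Fsetᶜ : Finset V).card + 1) * d) p ≤
    (1 - 1 / (2 * 3 ^ ((2 * (Fsetᶜ : Finset V).card + 1) * d))) *
      (Mx Fset hB x k0 p - mx Fset hB x k0 p) := by
  classical
  set n := (Fsetᶜ : Finset V).card with hn
  set L := (2 * n + 1) * d with hL
  set MM := Mx Fset hB x k0 p with hMM
  set mm := mx Fset hB x k0 p with hmm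
  set D := MM - mm with hDdef
  have h3L : (0:ℝ) < 3 ^ L := by positivity
  have hDnn : 0 ≤ D := sub_nonneg.2 (mx_le_Mx hB k0 p)
  have hMb : ∀ s, Mx Fset hB x (k0 + s) p ≤ MM := by
    intro s
    rw [hMM]
    exact Mx_mono halg hB hlocal (Nat.le_add_right _ _) p
  have hmb : ∀ s, mm ≤ mx Fset hB x (k0 + s) p := by
    intro s
    rw [hmm]
    exact mx_mono halg hB hlocal (Nat.le_add_right _ _) p
  rcases eq_or_lt_of_le hDnn with hD0 | hDpos
  · have h1 := hMb L
    have h2 := hmb L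
    rw [← hD0, mul_zero]
    linarith
  -- main case : D > 0
  set η : ℕ → ℝ := fun s => D / (2 * 3 ^ s) with hη
  have hηpos : ∀ s, 0 < η s := by
    intro s
    simp only [hη]
    positivity
  have hηmono : ∀ {s s' : ℕ}, s ≤ s' → η s' ≤ η s := by
    intro s s' h
    simp only [hη]
    apply div_le_div_of_nonneg_left hDpos.le ?_ ?_
    · positivity
    · have : (3:ℝ) ^ s ≤ 3 ^ s' := pow_le_pow_right₀ (by norm_num) h
      linarith
  have hηhalf : ∀ s, η s ≤ D / 2 := by
    intro s
    simp only [hη]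
    apply div_le_div_of_nonneg_left hDpos.le (by norm_num) ?_
    have h1 : (1:ℝ) ≤ 3 ^ s := by
      simpa using pow_le_pow_right₀ (by norm_num : (1:ℝ) ≤ 3) (Nat.zero_le s)
    linarith
  have hη3 : ∀ s, η (s + 1) = η s / 3 := by
    intro s
    simp only [hη, pow_succ]
    ring
  set X : ℕ → Finset V := fun s =>
    (Fsetᶜ).filter (fun i => MM - η s < x (k0 + s) i p) with hX
  set Zl : ℕ → Finset V := fun s =>
    (Fsetᶜ).filter (fun i => x (k0 + s) i p < mm + η s) with hZl
  have hXsub : ∀ s, X (s + 1) ⊆ X s := by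
    intro s i hi
    simp only [hX, Finset.mem_filter] at hi ⊢
    refine ⟨hi.1, ?_⟩
    by_contra hc
    push_neg at hc
    have hstep := step_le halg hB hlocal (k0 + s) (Finset.mem_compl.1 hi.1) p
    have h1 := hMb s
    have h2 := hη3 s
    have h3 := hi.2
    have hes : x (k0 + (s + 1)) i p = x (k0 + s + 1) i p := by
      rw [Nat.add_assoc]
    rw [hes] at h3
    linarith
  have hZsub : ∀ s, Zl (s + 1) ⊆ Zl s := by
    intro s i hi
    simp only [hZl, Finset.mem_filter] at hi ⊢
    refine ⟨hi.1, ?_⟩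
    by_contra hc
    push_neg at hc
    have hstep := step_ge halg hB hlocal (k0 + s) (Finset.mem_compl.1 hi.1) p
    have h1 := hmb s
    have h2 := hη3 s
    have h3 := hi.2
    have hes : x (k0 + (s + 1)) i p = x (k0 + s + 1) i p := by
      rw [Nat.add_assoc]
    rw [hes] at h3
    linarith
  have hdisj : ∀ s, Disjoint (X s) (Zl s) := by
    intro s
    rw [Finset.disjoint_left]
    intro a haX haZ
    simp only [hX, Finset.mem_filter] at haX
    simp only [hZl, Finset.mem_filter] at haZ
    have := hηhalf s
    linarith [haX.2, haZ.2]
  have hactive : ∀ s, (k0 + s) % d = p.val → (X s).Nonempty → (Zl s).Nonempty →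
      (X (s + 1)).card + (Zl (s + 1)).card + 1 ≤ (X s).card + (Zl s).card := by
    intro s hsp hX1 hZ1
    have hpc : pc hd (k0 + s) = p := Fin.ext hsp
    have hXuniv : X s ≠ Finset.univ := by
      intro h
      obtain ⟨a, ha⟩ := hZ1
      exact (Finset.disjoint_right.1 (hdisj s)) ha (h ▸ Finset.mem_univ a)
    have hZuniv : Zl s ≠ Finset.univ := by
      intro h
      obtain ⟨a, ha⟩ := hX1
      exact (Finset.disjoint_left.1 (hdisj s)) ha (h ▸ Finset.mem_univ a)
    have hm : (d + 1) * F = d * F + F := by ring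
    rcases hrobust (X s) (Zl s) hX1 hZ1 (hdisj s) hXuniv hZuniv with
      ⟨i, hiX, hcard⟩ | ⟨i, hiZ, hcard⟩
    · have hib : i ∉ Fset := Finset.mem_compl.1 (Finset.mem_filter.1 hiX).1
      set A := G.neighborFinset i \ X s with hA
      set W := A \ Fset with hW
      have hW1 : W ⊆ G.neighborFinset i :=
        (Finset.sdiff_subset).trans Finset.sdiff_subset
      have hWcard : d * F + 1 ≤ W.card := by
        rw [hW]
        have h1 := Finset.card_sdiff_add_card_inter A Fset
        have h2 : (A ∩ Fset).card ≤ F := by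
          refine le_trans (Finset.card_le_card ?_) (hlocal i)
          intro a ha
          rw [Finset.mem_inter] at ha ⊢
          exact ⟨ha.2, (Finset.mem_sdiff.1 ha.1).1⟩
        omega
      have hW3 : ∀ j ∈ W, j ∉ Fset ∧ x (k0 + s) j p ≤ MM - η s := by
        intro j hj
        rw [hW, Finset.mem_sdiff] at hj
        refine ⟨hj.2, ?_⟩
        have hjA := hj.1
        rw [hA, Finset.mem_sdiff] at hjA
        have hjb : j ∈ Fsetᶜ := Finset.mem_compl.2 hj.2
        refine le_of_not_gt (fun hlt => hjA.2 ?_)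
        simp only [hX, Finset.mem_filter]
        exact ⟨hjb, hlt⟩
      have hdrop := step_active_high halg hB hlocal (k0 + s) hib hW1 hWcard
        (by rw [hpc]; exact hW3)
      rw [hpc] at hdrop
      have hxi : x (k0 + s) i p ≤ MM :=
        le_trans (le_Mx (x := x) hB hib (k0 + s) p) (hMb s)
      have hiX' : i ∉ X (s + 1) := by
        simp only [hX, Finset.mem_filter, not_and]
        intro _
        have h2 := hη3 s
        have h3 := hMb s
        have hes : x (k0 + (s + 1)) i p = x (k0 + s + 1) i p := by
          rw [Nat.add_assoc]
        rw [hes]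
        push_neg
        linarith
      have hss : X (s + 1) ⊂ X s := ⟨hXsub s, fun hsub' => hiX' (hsub' hiX)⟩
      have hXlt := Finset.card_lt_card hss
      have hZle := Finset.card_le_card (hZsub s)
      omega
    · have hib : i ∉ Fset := Finset.mem_compl.1 (Finset.mem_filter.1 hiZ).1
      set A := G.neighborFinset i \ Zl s with hA
      set W := A \ Fset with hW
      have hW1 : W ⊆ G.neighborFinset i :=
        (Finset.sdiff_subset).trans Finset.sdiff_subset
      have hWcard : d * F + 1 ≤ W.card := by
        rw [hW]
        have h1 := Finset.card_sdiff_add_card_inter A Fset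
        have h2 : (A ∩ Fset).card ≤ F := by
          refine le_trans (Finset.card_le_card ?_) (hlocal i)
          intro a ha
          rw [Finset.mem_inter] at ha ⊢
          exact ⟨ha.2, (Finset.mem_sdiff.1 ha.1).1⟩
        omega
      have hW3 : ∀ j ∈ W, j ∉ Fset ∧ mm + η s ≤ x (k0 + s) j p := by
        intro j hj
        rw [hW, Finset.mem_sdiff] at hj
        refine ⟨hj.2, ?_⟩
        have hjA := hj.1
        rw [hA, Finset.mem_sdiff] at hjA
        have hjb : j ∈ Fsetᶜ := Finset.mem_compl.2 hj.2
        refine le_of_not_gt (fun hlt => hjA.2 ?_)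
        simp only [hZl, Finset.mem_filter]
        exact ⟨hjb, hlt⟩
      have hdrop := step_active_low halg hB hlocal (k0 + s) hib hW1 hWcard
        (by rw [hpc]; exact hW3)
      rw [hpc] at hdrop
      have hxi : mm ≤ x (k0 + s) i p :=
        le_trans (hmb s) (mx_le (x := x) hB hib (k0 + s) p)
      have hiZ' : i ∉ Zl (s + 1) := by
        simp only [hZl, Finset.mem_filter, not_and]
        intro _
        have h2 := hη3 s
        have h3 := hmb s
        have hes : x (k0 + (s + 1)) i p = x (k0 + s + 1) i p := by
          rw [Nat.add_assoc]
        rw [hes]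
        push_neg
        linarith
      have hss : Zl (s + 1) ⊂ Zl s := ⟨hZsub s, fun hsub' => hiZ' (hsub' hiZ)⟩
      have hZlt := Finset.card_lt_card hss
      have hXle := Finset.card_le_card (hXsub s)
      omega
  -- termination
  have hterm : ∃ s, s ≤ L ∧ (X s = ∅ ∨ Zl s = ∅) := by
    by_contra hcon
    push_neg at hcon
    set f : ℕ → ℕ := fun s => (X s).card + (Zl s).card with hf
    have hfstep : ∀ s, f (s + 1) ≤ f s := fun s =>
      add_le_add (Finset.card_le_card (hXsub s)) (Finset.card_le_card (hZsub s))
    have hfmono : ∀ {s s' : ℕ}, s ≤ s' → f s' ≤ f s := by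
      intro s s' h
      induction s', h using Nat.le_induction with
      | base => exact le_refl _
      | succ m hm ih => exact le_trans (hfstep m) ih
    have hblock : ∀ j, j + 1 ≤ 2 * n + 1 → f ((j + 1) * d) + 1 ≤ f (j * d) := by
      intro j hj
      have hrd : (p.val + d - k0 % d) % d < d := Nat.mod_lt _ hd
      set s := j * d + (p.val + d - k0 % d) % d with hs
      have hsact : (k0 + s) % d = p.val := mod_helper d k0 j p.val hd p.isLt
      have hjd : (j + 1) * d ≤ L := by
        rw [hL]
        exact Nat.mul_le_mul_right d (by omega)
      have hsL : s ≤ L := by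
        have : s < (j + 1) * d := by
          have : (j + 1) * d = j * d + d := by ring
          omega
        omega
      have hXne : (X s).Nonempty :=
        (hcon s hsL).1
      have hZne : (Zl s).Nonempty :=
        (hcon s hsL).2
      have hdec := hactive s hsact hXne hZne
      have h1 : f ((j + 1) * d) ≤ f (s + 1) := by
        apply hfmono
        have : (j + 1) * d = j * d + d := by ring
        omega
      have h3 : f s ≤ f (j * d) := hfmono (Nat.le_add_right _ _)
      have h2 : f (s + 1) + 1 ≤ f s := hdec
      omega
    have hiter : ∀ j, j ≤ 2 * n + 1 → f (j * d) + j ≤ f 0 := by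
      intro j
      induction j with
      | zero => intro _; simp
      | succ m ih =>
        intro hm
        have h1 := hblock m hm
        have h2 := ih (by omega)
        omega
    have hf0 : f 0 ≤ 2 * n := by
      have h1 : (X 0).card ≤ n := by
        rw [hn]
        exact Finset.card_le_card (Finset.filter_subset _ _)
      have h2 : (Zl 0).card ≤ n := by
        rw [hn]
        exact Finset.card_le_card (Finset.filter_subset _ _)
      simp only [hf]
      omega
    have hfL := hiter (2 * n + 1) (le_refl _)
    have hfLL : f ((2 * n + 1) * d) = f L := by rw [hL]
    omega
  -- conclusion
  obtain ⟨s, hsL, hcase⟩ := hterm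
  have hML := hMb L
  have hmL := hmb L
  have hηs := hηmono hsL
  have hηLval : η L = D / (2 * 3 ^ L) := by simp only [hη]
  have hkey : Mx Fset hB x (k0 + L) p - mx Fset hB x (k0 + L) p ≤ D - η L := by
    rcases hcase with hXe | hZe
    · have h1 : Mx Fset hB x (k0 + s) p ≤ MM - η s := by
        apply Finset.sup'_le
        intro i hi
        have hnotin : i ∉ X s := by rw [hXe]; exact Finset.notMem_empty i
        simp only [hX, Finset.mem_filter, not_and] at hnotin
        exact le_of_not_gt (fun hlt => hnotin hi hlt)
      have h2 : Mx Fset hB x (k0 + L) p ≤ MM - η s := by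
        refine le_trans (Mx_mono halg hB hlocal ?_ p) h1
        omega
      have h4 := hmb L
      rw [hDdef]
      linarith
    · have h1 : mm + η s ≤ mx Fset hB x (k0 + s) p := by
        apply Finset.le_inf'
        intro i hi
        have hnotin : i ∉ Zl s := by rw [hZe]; exact Finset.notMem_empty i
        simp only [hZl, Finset.mem_filter, not_and] at hnotin
        exact le_of_not_gt (fun hlt => hnotin hi hlt)
      have h2 : mm + η s ≤ mx Fset hB x (k0 + L) p := by
        refine le_trans h1 (mx_mono halg hB hlocal ?_ p)
        omega
      have h4 := hMb L
      rw [hDdef]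
      linarith
  have hfinal : D - η L = (1 - 1 / (2 * 3 ^ L)) * D := by
    rw [hηLval]
    field_simp
  rw [hDdef] at hfinal
  linarith [hkey, hfinal.le, hfinal.ge]

end Contract

section Final

variable {V : Type*} [Fintype V] [DecidableEq V] {d F : ℕ}
  {G : SimpleGraph V} [DecidableRel G.Adj] {Fset : Finset V}
  {x : ℕ → V → (Fin d → ℝ)} {msg : ℕ → V → V → (Fin d → ℝ)}
  {hd : 0 < d}

lemma geo_decay (halg : Algo1 d F hd G Fset x msg)
    (hB : (Fsetᶜ : Finset V).Nonempty)
    (hlocal : ∀ i : V, (Fset ∩ G.neighborFinset i).card ≤ F)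
    (hrobust : RRobust G ((d + 1) * F + 1)) (p : Fin d) (q : ℕ) :
    Mx Fset hB x ((2 * (Fsetᶜ : Finset V).card + 1) * d * q) p -
      mx Fset hB x ((2 * (Fsetᶜ : Finset V).card + 1) * d * q) p ≤
    (1 - 1 / (2 * 3 ^ ((2 * (Fsetᶜ : Finset V).card + 1) * d))) ^ q *
      (Mx Fset hB x 0 p - mx Fset hB x 0 p) := by
  set L := (2 * (Fsetᶜ : Finset V).card + 1) * d with hL
  set θ : ℝ := 1 - 1 / (2 * 3 ^ L) with hθ
  have h3L : (1:ℝ) ≤ 3 ^ L := by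
    simpa using pow_le_pow_right₀ (by norm_num : (1:ℝ) ≤ 3) (Nat.zero_le L)
  have hθpos : 0 < θ := by
    rw [hθ]
    have : 1 / (2 * (3:ℝ) ^ L) ≤ 1 / 2 := by
      apply div_le_div_of_nonneg_left (by norm_num) (by norm_num)
      linarith
    linarith
  clear_value L θ
  induction q with
  | zero => rw [Nat.mul_zero, pow_zero, one_mul]
  | succ m ih =>
    have hstep := window_contraction halg hB hlocal hrobust p (L * m)
    rw [← hL, ← hθ] at hstep
    have heq : L * m + L = L * (m + 1) := by ring
    rw [heq] at hstep
    have hmul := mul_le_mul_of_nonneg_left ih hθpos.le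
    calc Mx Fset hB x (L * (m + 1)) p - mx Fset hB x (L * (m + 1)) p
        ≤ θ * (Mx Fset hB x (L * m) p - mx Fset hB x (L * m) p) := hstep
      _ ≤ θ * (θ ^ m * (Mx Fset hB x 0 p - mx Fset hB x 0 p)) := hmul
      _ = θ ^ (m + 1) * (Mx Fset hB x 0 p - mx Fset hB x 0 p) := by ring

end Final

theorem stmt12 {V : Type*} [Fintype V] [DecidableEq V]
    (d F : ℕ) (hd : 0 < d) (G : SimpleGraph V) [DecidableRel G.Adj]
    (Fset : Finset V) (x : ℕ → V → (Fin d → ℝ))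
    (msg : ℕ → V → V → (Fin d → ℝ))
    (halg : Algo1 d F hd G Fset x msg)
    (hB : (Fsetᶜ : Finset V).Nonempty)
    (hlocal : ∀ i : V, (Fset ∩ G.neighborFinset i).card ≤ F)
    (hrobust : RRobust G ((d + 1) * F + 1)) :
    ∃ (xbar : Fin d → ℝ) (C γ : ℝ), 0 ≤ C ∧ 0 ≤ γ ∧ γ < 1 ∧
      ∀ (i : V), i ∉ Fset → ∀ k : ℕ, ‖x k i - xbar‖ ≤ C * γ ^ k := by
  classical
  set n := (Fsetᶜ : Finset V).card with hn
  set L := (2 * n + 1) * d with hL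
  set θ : ℝ := 1 - 1 / (2 * 3 ^ L) with hθ
  have hLpos : 0 < L := by
    rw [hL]
    exact Nat.mul_pos (by omega) hd
  have h3L : (1:ℝ) ≤ 3 ^ L := by
    simpa using pow_le_pow_right₀ (by norm_num : (1:ℝ) ≤ 3) (Nat.zero_le L)
  have hθpos : 0 < θ := by
    rw [hθ]
    have h1 : 1 / (2 * (3:ℝ) ^ L) ≤ 1 / 2 := by
      apply div_le_div_of_nonneg_left (by norm_num) (by norm_num)
      linarith
    linarith
  have hθlt : θ < 1 := by
    rw [hθ]
    have h1 : 0 < 1 / (2 * (3:ℝ) ^ L) := by positivity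
    linarith
  have hgeo := geo_decay halg hB hlocal hrobust
  rw [← hn] at hgeo
  rw [← hL] at hgeo
  rw [← hθ] at hgeo
  -- bound for every k
  have hbound : ∀ (k : ℕ) (p : Fin d), Mx Fset hB x k p - mx Fset hB x k p ≤
      θ ^ (k / L) * (Mx Fset hB x 0 p - mx Fset hB x 0 p) := by
    intro k p
    have h1 : L * (k / L) ≤ k := by
      rw [mul_comm]
      exact Nat.div_mul_le_self k L
    have h2 := hgeo p (k / L)
    have h3 := Mx_mono halg hB hlocal h1 p
    have h4 := mx_mono halg hB hlocal h1 p
    linarith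
  -- the consensus point
  set xbar : Fin d → ℝ := fun p => sInf (Set.range fun k => Mx Fset hB x k p)
    with hxbar
  have hlb : ∀ (p : Fin d) (k : ℕ),
      mx Fset hB x k p ≤ xbar p ∧ xbar p ≤ Mx Fset hB x k p := by
    intro p k
    have hbdd : BddBelow (Set.range fun k' => Mx Fset hB x k' p) := by
      refine ⟨mx Fset hB x 0 p, ?_⟩
      rintro b ⟨k', rfl⟩
      exact le_trans (mx_mono halg hB hlocal (Nat.zero_le k') p) (mx_le_Mx hB k' p)
    constructor
    · refine le_csInf ⟨Mx Fset hB x 0 p, 0, rfl⟩ ?_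
      rintro b ⟨k', rfl⟩
      rcases le_total k k' with h | h
      · exact le_trans (mx_mono halg hB hlocal h p) (mx_le_Mx hB k' p)
      · exact le_trans (mx_le_Mx hB k p) (Mx_mono halg hB hlocal h p)
    · exact csInf_le hbdd ⟨k, rfl⟩
  have hFinNe : (Finset.univ : Finset (Fin d)).Nonempty :=
    ⟨⟨0, hd⟩, Finset.mem_univ _⟩
  set C0 : ℝ := Finset.univ.sup' hFinNe
    (fun p => Mx Fset hB x 0 p - mx Fset hB x 0 p) with hC0
  have hΔleC0 : ∀ p : Fin d, Mx Fset hB x 0 p - mx Fset hB x 0 p ≤ C0 := by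
    intro p
    rw [hC0]
    exact Finset.le_sup' (fun p => Mx Fset hB x 0 p - mx Fset hB x 0 p)
      (Finset.mem_univ p)
  have hC0nn : 0 ≤ C0 := by
    have h1 : 0 ≤ Mx Fset hB x 0 ⟨0, hd⟩ - mx Fset hB x 0 ⟨0, hd⟩ :=
      sub_nonneg.2 (mx_le_Mx hB 0 ⟨0, hd⟩)
    exact le_trans h1 (hΔleC0 ⟨0, hd⟩)
  have hagent : ∀ i ∉ Fset, ∀ k : ℕ, ‖x k i - xbar‖ ≤ C0 * θ ^ (k / L) := by
    intro i hi k
    have hnn : 0 ≤ C0 * θ ^ (k / L) :=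
      mul_nonneg hC0nn (pow_nonneg hθpos.le _)
    rw [pi_norm_le_iff_of_nonneg hnn]
    intro p
    rw [Pi.sub_apply, Real.norm_eq_abs]
    have hxm := mx_le (x := x) hB hi k p
    have hxM := le_Mx (x := x) hB hi k p
    have hxb := hlb p k
    have habs : |x k i p - xbar p| ≤ Mx Fset hB x k p - mx Fset hB x k p := by
      rw [abs_le]
      constructor
      · have := hxb.2
        linarith
      · have := hxb.1
        linarith
    refine le_trans habs (le_trans (hbound k p) ?_)
    rw [mul_comm C0 (θ ^ (k / L))]
    exact mul_le_mul_of_nonneg_left (hΔleC0 p) (pow_nonneg hθpos.le _)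
  -- convert to a clean geometric bound
  have hLR : (0:ℝ) < (L:ℝ) := by exact_mod_cast hLpos
  refine ⟨xbar, C0 / θ, θ ^ (1 / (L:ℝ)), div_nonneg hC0nn hθpos.le,
    Real.rpow_nonneg hθpos.le _, Real.rpow_lt_one hθpos.le hθlt (by positivity),
    ?_⟩
  intro i hi k
  have h1 := hagent i hi k
  -- θ ^ (k / L : ℕ) ≤ (θ ^ (1/L)) ^ k / θ
  have hdm := Nat.div_add_mod k L
  have hml : k % L < L := Nat.mod_lt k hLpos
  have hcast : (k:ℝ) < (L:ℝ) * ((k / L : ℕ):ℝ) + (L:ℝ) := by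
    have : k < L * (k / L) + L := by omega
    exact_mod_cast this
  have hexp : (k:ℝ) / (L:ℝ) - 1 ≤ ((k / L : ℕ):ℝ) := by
    rw [div_sub_one hLR.ne', div_le_iff₀ hLR]
    nlinarith
  have hr1 : θ ^ (k / L) = θ ^ (((k / L : ℕ):ℝ)) := (Real.rpow_natCast θ _).symm
  have hr2 : θ ^ (((k / L : ℕ):ℝ)) ≤ θ ^ ((k:ℝ) / (L:ℝ) - 1) :=
    Real.rpow_le_rpow_of_exponent_ge hθpos hθlt.le hexp
  have hr3 : θ ^ ((k:ℝ) / (L:ℝ) - 1) = θ ^ ((k:ℝ) / (L:ℝ)) / θ := by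
    rw [Real.rpow_sub hθpos, Real.rpow_one]
  have hr4 : (θ ^ (1 / (L:ℝ))) ^ k = θ ^ ((k:ℝ) / (L:ℝ)) := by
    rw [← Real.rpow_natCast (θ ^ (1 / (L:ℝ))) k, ← Real.rpow_mul hθpos.le]
    congr 1
    ring
  have hkey : θ ^ (k / L) ≤ (θ ^ (1 / (L:ℝ))) ^ k / θ := by
    rw [hr1, hr4, ← hr3]
    exact hr2
  calc ‖x k i - xbar‖ ≤ C0 * θ ^ (k / L) := h1
    _ ≤ C0 * ((θ ^ (1 / (L:ℝ))) ^ k / θ) := mul_le_mul_of_nonneg_left hkey hC0nn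
    _ = C0 / θ * (θ ^ (1 / (L:ℝ))) ^ k := by ring
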